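/- Let n ≥ 1, b ≥ 1, k ≥ 1 be integers with b dividing n and k ≤ n/b, and let C be any n×n real matrix such that every entry of CᵀC is nonnegative. Then (k/n)·‖C‖_F² ≤ sens_{k,b}(C)² ≤ k·‖C‖_F², where ‖·‖_F is the Frobenius norm. -/

import Mathlib

open Finset Matrix
open Fin.NatCast

/-- The `b`-min-separated `L2`-sensitivity with at most `k` participations:
`sens_{k,b}(C) = max_{π ∈ Π_{k,b}} sqrt(Σ_{i,j∈π} (CᵀC)[i,j])`. -/
noncomputable def sens (n b k : ℕ) (C : Matrix (Fin n) (Fin n) ℝ) : ℝ :=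
  Real.sqrt (sSup { x : ℝ | ∃ π : Finset (Fin n), π.card ≤ k ∧
    (∀ i ∈ π, ∀ j ∈ π, i ≠ j → b ≤ Nat.dist (i : ℕ) (j : ℕ)) ∧
    x = ∑ i ∈ π, ∑ j ∈ π, (Cᵀ * C) i j })

/-- The Frobenius norm. -/
noncomputable def frob (n : ℕ) (C : Matrix (Fin n) (Fin n) ℝ) : ℝ :=
  Real.sqrt (∑ i : Fin n, ∑ j : Fin n, (C i j) ^ 2)

lemma dist_mod_lemma (n b x d : ℕ) (hb : 1 ≤ b) (h1 : b ≤ d) (h2 : d + b ≤ n) :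
    b ≤ Nat.dist (x % n) ((x + d) % n) := by
  have hn : 0 < n := by omega
  have hu : x % n < n := Nat.mod_lt _ hn
  have hd : d < n := by omega
  have hv : (x + d) % n = (x % n + d) % n := by
    rw [Nat.add_mod, Nat.mod_eq_of_lt hd]
  rcases lt_or_ge (x % n + d) n with h | h
  · rw [hv, Nat.mod_eq_of_lt h, Nat.dist_eq_sub_of_le (Nat.le_add_right _ d)]
    omega
  · have e1 : (x % n + d) % n = x % n + d - n := by
      rw [Nat.mod_eq_sub_mod h]
      exact Nat.mod_eq_of_lt (by omega)
    have e2 : x % n + d - n ≤ x % n := by omega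
    rw [hv, e1, Nat.dist_eq_sub_of_le_right e2]
    omega

/-- `(k/n)·‖C‖_F² ≤ sens_{k,b}(C)² ≤ k·‖C‖_F²`. -/
theorem sens_frobenius_bounds (n b k : ℕ) (hn : 1 ≤ n) (hb : 1 ≤ b) (hk : 1 ≤ k)
    (hdvd : b ∣ n) (hkn : k ≤ n / b)
    (C : Matrix (Fin n) (Fin n) ℝ) (hC : ∀ i j, 0 ≤ (Cᵀ * C) i j) :
    ((k : ℝ) / n) * frob n C ^ 2 ≤ sens n b k C ^ 2 ∧
      sens n b k C ^ 2 ≤ (k : ℝ) * frob n C ^ 2 := by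
  haveI : NeZero n := ⟨by omega⟩
  have hkb : k * b ≤ n := by
    obtain ⟨c, hc⟩ := hdvd
    have hcb : n / b = c := by rw [hc]; exact Nat.mul_div_cancel_left c (by omega)
    calc k * b ≤ (n / b) * b := Nat.mul_le_mul_right b hkn
    _ = n := by rw [hcb, hc]; ring
  set S : Set ℝ := { x : ℝ | ∃ π : Finset (Fin n), π.card ≤ k ∧
    (∀ i ∈ π, ∀ j ∈ π, i ≠ j → b ≤ Nat.dist (i : ℕ) (j : ℕ)) ∧
    x = ∑ i ∈ π, ∑ j ∈ π, (Cᵀ * C) i j } with hS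
  have hfrob : frob n C ^ 2 = ∑ i : Fin n, ∑ j : Fin n, (C i j) ^ 2 := by
    rw [frob, Real.sq_sqrt (by positivity)]
  have key : ∀ (i j : Fin n), (Cᵀ * C) i j = ∑ l : Fin n, C l i * C l j := by
    intro i j; rw [Matrix.mul_apply]; simp [Matrix.transpose_apply]
  -- upper bound for elements of S
  have hub : ∀ x ∈ S, x ≤ (k : ℝ) * frob n C ^ 2 := by
    rintro x ⟨π, hcard, -, rfl⟩
    calc (∑ i ∈ π, ∑ j ∈ π, (Cᵀ * C) i j)
        = ∑ i ∈ π, ∑ j ∈ π, ∑ l : Fin n, C l i * C l j := by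
          exact Finset.sum_congr rfl fun i _ => Finset.sum_congr rfl fun j _ => key i j
      _ = ∑ i ∈ π, ∑ l : Fin n, ∑ j ∈ π, C l i * C l j := by
          exact Finset.sum_congr rfl fun i _ => by rw [Finset.sum_comm]
      _ = ∑ l : Fin n, ∑ i ∈ π, ∑ j ∈ π, C l i * C l j := by rw [Finset.sum_comm]
      _ = ∑ l : Fin n, (∑ i ∈ π, C l i) ^ 2 := by
          refine Finset.sum_congr rfl fun l _ => ?_
          rw [sq, Finset.sum_mul_sum]
      _ ≤ ∑ l : Fin n, (π.card : ℝ) * ∑ i ∈ π, (C l i) ^ 2 :=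
          Finset.sum_le_sum fun l _ => sq_sum_le_card_mul_sum_sq
      _ ≤ ∑ l : Fin n, (k : ℝ) * ∑ i : Fin n, (C l i) ^ 2 := by
          refine Finset.sum_le_sum fun l _ => ?_
          apply mul_le_mul (by exact_mod_cast hcard)
            (Finset.sum_le_sum_of_subset_of_nonneg (Finset.subset_univ π)
              (fun i _ _ => sq_nonneg _)) (by positivity) (by positivity)
      _ = (k : ℝ) * frob n C ^ 2 := by
          rw [← Finset.mul_sum, hfrob, Finset.sum_comm]
  have hne : S.Nonempty := ⟨0, ∅, by simp⟩
  have hbdd : BddAbove S := ⟨(k : ℝ) * frob n C ^ 2, hub⟩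
  have hsSup0 : 0 ≤ sSup S := le_csSup hbdd (⟨∅, by simp⟩ : (0:ℝ) ∈ S)
  have hsens : sens n b k C ^ 2 = sSup S := by
    rw [sens, Real.sq_sqrt hsSup0]
  -- the covering family
  set f : Fin n → ℕ → Fin n := fun a t => a + ((t * b : ℕ) : Fin n) with hf
  have hval : ∀ (a : Fin n) (t : ℕ), t < k → (f a t : ℕ) = ((a : ℕ) + t * b) % n := by
    intro a t ht
    have htb : t * b < n := by
      calc t * b < k * b := (Nat.mul_lt_mul_right (by omega)).mpr ht
      _ ≤ n := hkb
    show ((a + ((t * b : ℕ) : Fin n) : Fin n) : ℕ) = _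
    rw [Fin.add_def]
    simp only [Fin.val_natCast]
    rw [Nat.mod_eq_of_lt htb]
  have hsep : ∀ (a : Fin n) (t₁ t₂ : ℕ), t₁ < t₂ → t₂ < k →
      b ≤ Nat.dist (f a t₁ : ℕ) (f a t₂ : ℕ) := by
    intro a t₁ t₂ hlt ht₂
    rw [hval a t₁ (by omega), hval a t₂ ht₂]
    have he : (a : ℕ) + t₂ * b = ((a : ℕ) + t₁ * b) + (t₂ - t₁) * b := by
      have : t₂ * b = t₁ * b + (t₂ - t₁) * b := by
        rw [← Nat.add_mul]; congr 1; omega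
      omega
    rw [he]
    have h1 : b ≤ (t₂ - t₁) * b := by
      calc b = 1 * b := (one_mul b).symm
      _ ≤ (t₂ - t₁) * b := Nat.mul_le_mul_right b (by omega)
    have h2 : (t₂ - t₁) * b + b ≤ n := by
      have : (t₂ - t₁ + 1) * b ≤ k * b := Nat.mul_le_mul_right b (by omega)
      rw [Nat.add_mul, one_mul] at this
      omega
    exact dist_mod_lemma n b _ _ hb h1 h2
  have hinj : ∀ (a : Fin n), ∀ t₁ ∈ Finset.range k, ∀ t₂ ∈ Finset.range k,
      f a t₁ = f a t₂ → t₁ = t₂ := by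
    intro a t₁ ht₁ t₂ ht₂ h
    simp only [Finset.mem_range] at ht₁ ht₂
    by_contra hne'
    rcases lt_or_gt_of_ne hne' with hlt | hlt
    · have := hsep a t₁ t₂ hlt ht₂
      rw [h, Nat.dist_self] at this; omega
    · have := hsep a t₂ t₁ hlt ht₁
      rw [h, Nat.dist_self] at this; omega
  set π : Fin n → Finset (Fin n) := fun a => (Finset.range k).image (f a) with hπ
  have hmem : ∀ a : Fin n, (∑ i ∈ π a, ∑ j ∈ π a, (Cᵀ * C) i j) ∈ S := by
    intro a
    refine ⟨π a, ?_, ?_, rfl⟩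
    · calc (π a).card ≤ (Finset.range k).card := Finset.card_image_le
      _ = k := Finset.card_range k
    · intro i hi j hj hij
      simp only [hπ, Finset.mem_image, Finset.mem_range] at hi hj
      obtain ⟨t₁, ht₁, rfl⟩ := hi
      obtain ⟨t₂, ht₂, rfl⟩ := hj
      have hne'' : t₁ ≠ t₂ := fun h => hij (by rw [h])
      rcases lt_or_gt_of_ne hne'' with hlt | hlt
      · exact hsep a t₁ t₂ hlt ht₂
      · rw [Nat.dist_comm]; exact hsep a t₂ t₁ hlt ht₁
  have htr : ∑ i : Fin n, (Cᵀ * C) i i = frob n C ^ 2 := by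
    rw [hfrob]
    calc ∑ i : Fin n, (Cᵀ * C) i i = ∑ i : Fin n, ∑ l : Fin n, (C l i) ^ 2 := by
          refine Finset.sum_congr rfl fun i _ => ?_
          rw [key i i]
          exact Finset.sum_congr rfl fun l _ => (sq (C l i)).symm
      _ = ∑ l : Fin n, ∑ i : Fin n, (C l i) ^ 2 := by rw [Finset.sum_comm]
  have hcover : ∑ a : Fin n, ∑ i ∈ π a, (Cᵀ * C) i i = (k : ℝ) * frob n C ^ 2 := by
    calc ∑ a : Fin n, ∑ i ∈ π a, (Cᵀ * C) i i
        = ∑ a : Fin n, ∑ t ∈ Finset.range k, (Cᵀ * C) (f a t) (f a t) :=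
          Finset.sum_congr rfl fun a _ => Finset.sum_image (hinj a)
      _ = ∑ t ∈ Finset.range k, ∑ a : Fin n, (Cᵀ * C) (f a t) (f a t) := by
          rw [Finset.sum_comm]
      _ = ∑ t ∈ Finset.range k, ∑ i : Fin n, (Cᵀ * C) i i := by
          refine Finset.sum_congr rfl fun t _ => ?_
          exact Fintype.sum_equiv (Equiv.addRight ((t * b : ℕ) : Fin n)) _ _ fun a => rfl
      _ = (k : ℝ) * frob n C ^ 2 := by
          rw [Finset.sum_const, Finset.card_range, htr, nsmul_eq_mul]
  have hstep : ∀ a : Fin n, ∑ i ∈ π a, (Cᵀ * C) i i ≤ sSup S := by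
    intro a
    refine le_trans ?_ (le_csSup hbdd (hmem a))
    refine Finset.sum_le_sum fun i hi => ?_
    exact Finset.single_le_sum (fun j _ => hC i j) hi
  have hmain : (k : ℝ) * frob n C ^ 2 ≤ (n : ℝ) * sSup S := by
    rw [← hcover]
    calc ∑ a : Fin n, ∑ i ∈ π a, (Cᵀ * C) i i ≤ ∑ _a : Fin n, sSup S :=
          Finset.sum_le_sum fun a _ => hstep a
      _ = (n : ℝ) * sSup S := by rw [Finset.sum_const, Finset.card_univ,
            Fintype.card_fin, nsmul_eq_mul]
  constructor
  · rw [hsens, div_mul_eq_mul_div, div_le_iff₀ (by positivity)]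
    linarith [hmain]
  · rw [hsens]
    exact csSup_le hne hub
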